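/- Discrete-time VTM convergence for two blocks: let A₁, A₂ be r×r symmetric positive definite and Z positive diagonal, and define the iteration matrix M = (I + Z·A₁)⁻¹(I − Z·A₂)(I + Z·A₂)⁻¹(I − Z·A₁). Then the spectral radius of M is strictly less than 1. -/

import Mathlib

open Matrix

private lemma dtm_map_mul {r : ℕ} (M N : Matrix (Fin r) (Fin r) ℝ) :
    (M * N).map Complex.ofReal = M.map Complex.ofReal * N.map Complex.ofReal :=
  Matrix.map_mul (f := Complex.ofRealHom)

private lemma dtm_mulVec_plus {r : ℕ} (z : Fin r → ℝ) (A : Matrix (Fin r) (Fin r) ℝ)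
    (x : Fin r → ℂ) (i : Fin r) :
    (((1 + Matrix.diagonal z * A).map Complex.ofReal) *ᵥ x) i
      = x i + (z i : ℂ) * ((A.map Complex.ofReal) *ᵥ x) i := by
  simp only [Matrix.mulVec, dotProduct, Matrix.map_apply, Matrix.add_apply,
    Matrix.one_apply, Matrix.diagonal_mul, Complex.ofReal_add, Complex.ofReal_mul,
    Finset.mul_sum]
  have h : ∀ j, ((if i = j then (1:ℝ) else 0 : ℝ) + (z i : ℝ) * A i j : ℂ) * x j
      = (if i = j then x j else 0) + (z i : ℂ) * ((A i j : ℂ) * x j) := by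
    intro j; split <;> push_cast <;> ring
  rw [Finset.sum_congr rfl fun j _ => h j, Finset.sum_add_distrib, Finset.sum_ite_eq]
  simp

private lemma dtm_mulVec_minus {r : ℕ} (z : Fin r → ℝ) (A : Matrix (Fin r) (Fin r) ℝ)
    (x : Fin r → ℂ) (i : Fin r) :
    (((1 - Matrix.diagonal z * A).map Complex.ofReal) *ᵥ x) i
      = x i - (z i : ℂ) * ((A.map Complex.ofReal) *ᵥ x) i := by
  simp only [Matrix.mulVec, dotProduct, Matrix.map_apply, Matrix.sub_apply,
    Matrix.one_apply, Matrix.diagonal_mul, Complex.ofReal_sub, Complex.ofReal_mul,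
    Finset.mul_sum]
  have h : ∀ j, ((if i = j then (1:ℝ) else 0 : ℝ) - (z i : ℝ) * A i j : ℂ) * x j
      = (if i = j then x j else 0) - (z i : ℂ) * ((A i j : ℂ) * x j) := by
    intro j; split <;> push_cast <;> ring
  rw [Finset.sum_congr rfl fun j _ => h j, Finset.sum_sub_distrib, Finset.sum_ite_eq]
  simp


private lemma dtm_re_form {r : ℕ} (A : Matrix (Fin r) (Fin r) ℝ) (x : Fin r → ℂ) :
    (star x ⬝ᵥ ((A.map Complex.ofReal) *ᵥ x)).re
      = (fun i => (x i).re) ⬝ᵥ (A *ᵥ fun i => (x i).re)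
        + (fun i => (x i).im) ⬝ᵥ (A *ᵥ fun i => (x i).im) := by
  simp only [dotProduct, Matrix.mulVec, Matrix.map_apply, Pi.star_apply,
    Finset.mul_sum, Complex.re_sum]
  rw [← Finset.sum_add_distrib]
  refine Finset.sum_congr rfl fun i _ => ?_
  rw [← Finset.sum_add_distrib]
  refine Finset.sum_congr rfl fun j _ => ?_
  simp only [Complex.mul_re, Complex.mul_im, Complex.ofReal_re, Complex.ofReal_im,
    RCLike.star_def, Complex.conj_re, Complex.conj_im]
  ring

private lemma dtm_re_pos {r : ℕ} {A : Matrix (Fin r) (Fin r) ℝ} (hA : A.PosDef)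
    {x : Fin r → ℂ} (hx : x ≠ 0) :
    0 < (star x ⬝ᵥ ((A.map Complex.ofReal) *ᵥ x)).re := by
  rw [dtm_re_form]
  have hsd := hA.posSemidef
  by_cases hre : (fun i => (x i).re) = 0
  · have him : (fun i => (x i).im) ≠ 0 := by
      intro h
      apply hx
      funext i
      exact Complex.ext (congrFun hre i) (congrFun h i)
    have := hA.dotProduct_mulVec_pos him
    have h0 := hsd.dotProduct_mulVec_nonneg (fun i => (x i).re)
    simp only [star_trivial] at this h0
    linarith
  · have := hA.dotProduct_mulVec_pos hre
    have h0 := hsd.dotProduct_mulVec_nonneg (fun i => (x i).im)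
    simp only [star_trivial] at this h0
    linarith

private lemma dtm_re_nonneg {r : ℕ} {A : Matrix (Fin r) (Fin r) ℝ} (hA : A.PosSemidef)
    (x : Fin r → ℂ) :
    0 ≤ (star x ⬝ᵥ ((A.map Complex.ofReal) *ᵥ x)).re := by
  rw [dtm_re_form]
  have h1 := hA.dotProduct_mulVec_nonneg (fun i => (x i).re)
  have h2 := hA.dotProduct_mulVec_nonneg (fun i => (x i).im)
  simp only [star_trivial] at h1 h2
  linarith

private lemma dtm_key_id {r : ℕ} (z : Fin r → ℝ) (hz : ∀ i, 0 < z i) (x y : Fin r → ℂ) :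
    ∑ i, (z i)⁻¹ * Complex.normSq (x i - (z i : ℂ) * y i)
      = ∑ i, (z i)⁻¹ * Complex.normSq (x i + (z i : ℂ) * y i) - 4 * (star x ⬝ᵥ y).re := by
  have : (star x ⬝ᵥ y).re = ∑ i, ((x i).re * (y i).re + (x i).im * (y i).im) := by
    simp only [dotProduct, Pi.star_apply, Complex.re_sum]
    exact Finset.sum_congr rfl fun i _ => by simp [Complex.mul_re]
  rw [this, Finset.mul_sum, ← Finset.sum_sub_distrib]
  refine Finset.sum_congr rfl fun i _ => ?_
  have hzne : z i ≠ 0 := (hz i).ne'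
  simp only [Complex.normSq_apply, Complex.sub_re, Complex.sub_im, Complex.add_re,
    Complex.add_im, Complex.mul_re, Complex.mul_im, Complex.ofReal_re, Complex.ofReal_im]
  field_simp
  ring

theorem dtm_stmt18 {r : ℕ} (A₁ A₂ : Matrix (Fin r) (Fin r) ℝ)
    (hA₁ : A₁.PosDef) (hA₂ : A₂.PosDef) (z : Fin r → ℝ) (hz : ∀ i, 0 < z i) :
    let Z : Matrix (Fin r) (Fin r) ℝ := Matrix.diagonal z
    spectralRadius ℂ
      (((1 + Z * A₁)⁻¹ * (1 - Z * A₂) * (1 + Z * A₂)⁻¹ * (1 - Z * A₁)).map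
        Complex.ofReal) < 1 := by
  intro Z
  have hfac : ∀ A : Matrix (Fin r) (Fin r) ℝ,
      1 + Z * A = Z * (Matrix.diagonal (fun i => (z i)⁻¹) + A) := by
    intro A
    rw [mul_add, Matrix.diagonal_mul_diagonal]
    congr 1
    have h1 : (fun i => z i * (z i)⁻¹) = fun _ => (1 : ℝ) :=
      funext fun i => mul_inv_cancel₀ (hz i).ne'
    rw [h1, Matrix.diagonal_one]
  have hDpos : (Matrix.diagonal fun i => (z i)⁻¹).PosDef :=
    Matrix.posDef_diagonal_iff.mpr fun i => inv_pos.mpr (hz i)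
  have hdet : ∀ A : Matrix (Fin r) (Fin r) ℝ, A.PosDef → IsUnit (1 + Z * A).det := by
    intro A hA
    rw [hfac A, Matrix.det_mul]
    refine isUnit_iff_ne_zero.mpr (mul_pos ?_ ?_).ne'
    · rw [Matrix.det_diagonal]; exact Finset.prod_pos fun i _ => hz i
    · exact (hDpos.add hA).det_pos
  set Mr := (1 + Z * A₁)⁻¹ * (1 - Z * A₂) * (1 + Z * A₂)⁻¹ * (1 - Z * A₁) with hMr
  set Mc := Mr.map Complex.ofReal with hMc
  have key : ∀ μ ∈ spectrum ℂ Mc, ‖μ‖₊ < 1 := by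
    intro μ hμ
    rw [← AlgEquiv.spectrum_eq (Matrix.toLinAlgEquiv' (R := ℂ) (n := Fin r)) Mc,
      ← Module.End.hasEigenvalue_iff_mem_spectrum] at hμ
    obtain ⟨v, hv⟩ := hμ.exists_hasEigenvector
    have hv0 : v ≠ 0 := hv.right
    have hMv : Mc *ᵥ v = μ • v := by
      have h := hv.apply_eq_smul
      rwa [Matrix.toLinAlgEquiv'_apply] at h
    have hm1 : (1 + Z * A₁) * Mr = (1 - Z * A₂) * ((1 + Z * A₂)⁻¹ * (1 - Z * A₁)) := by
      rw [hMr]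
      simp only [← mul_assoc]
      simp only [mul_assoc]
      rw [Matrix.mul_nonsing_inv_cancel_left _ _ (hdet A₁ hA₁)]
    have hm2 : (1 + Z * A₂) * ((1 + Z * A₂)⁻¹ * (1 - Z * A₁)) = 1 - Z * A₁ :=
      Matrix.mul_nonsing_inv_cancel_left _ _ (hdet A₂ hA₂)
    set u := ((1 + Z * A₂)⁻¹ * (1 - Z * A₁)).map Complex.ofReal *ᵥ v with hu
    have e1 : (1 + Z * A₂).map Complex.ofReal *ᵥ u = (1 - Z * A₁).map Complex.ofReal *ᵥ v := by
      rw [hu, Matrix.mulVec_mulVec, ← dtm_map_mul, hm2]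
    have e2 : (1 - Z * A₂).map Complex.ofReal *ᵥ u
        = μ • ((1 + Z * A₁).map Complex.ofReal *ᵥ v) := by
      rw [hu, Matrix.mulVec_mulVec, ← dtm_map_mul, ← hm1, dtm_map_mul, ← hMc,
        ← Matrix.mulVec_mulVec, hMv, Matrix.mulVec_smul]
    set y₁ := A₁.map Complex.ofReal *ᵥ v with hy₁
    set y₂ := A₂.map Complex.ofReal *ᵥ u with hy₂
    have hminus1 : (1 - Z * A₁).map Complex.ofReal *ᵥ v = fun i => v i - (z i : ℂ) * y₁ i :=
      funext fun i => dtm_mulVec_minus z A₁ v i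
    have hplus1 : (1 + Z * A₁).map Complex.ofReal *ᵥ v = fun i => v i + (z i : ℂ) * y₁ i :=
      funext fun i => dtm_mulVec_plus z A₁ v i
    have hminus2 : (1 - Z * A₂).map Complex.ofReal *ᵥ u = fun i => u i - (z i : ℂ) * y₂ i :=
      funext fun i => dtm_mulVec_minus z A₂ u i
    have hplus2 : (1 + Z * A₂).map Complex.ofReal *ᵥ u = fun i => u i + (z i : ℂ) * y₂ i :=
      funext fun i => dtm_mulVec_plus z A₂ u i
    set N : ℝ := ∑ i, (z i)⁻¹ * Complex.normSq (v i + (z i : ℂ) * y₁ i) with hN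
    have hNnonneg : 0 ≤ N :=
      Finset.sum_nonneg fun i _ =>
        mul_nonneg (inv_pos.mpr (hz i)).le (Complex.normSq_nonneg _)
    have h1 : 0 < (star v ⬝ᵥ y₁).re := dtm_re_pos hA₁ hv0
    have h2 : 0 ≤ (star u ⬝ᵥ y₂).re := dtm_re_nonneg hA₂.posSemidef u
    have id₁ := dtm_key_id z hz v y₁
    have id₂ := dtm_key_id z hz u y₂
    -- chain of equalities
    have step1 : ∑ i, (z i)⁻¹ * Complex.normSq (u i + (z i : ℂ) * y₂ i)
        = N - 4 * (star v ⬝ᵥ y₁).re := by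
      rw [← id₁]
      have h : (fun i => u i + (z i : ℂ) * y₂ i) = fun i => v i - (z i : ℂ) * y₁ i := by
        rw [← hplus2, ← hminus1, e1]
      exact Finset.sum_congr rfl fun i _ => by rw [congrFun h i]
    have step2 : ∑ i, (z i)⁻¹ * Complex.normSq (u i - (z i : ℂ) * y₂ i)
        = Complex.normSq μ * N := by
      have h : (fun i => u i - (z i : ℂ) * y₂ i)
          = fun i => μ * (v i + (z i : ℂ) * y₁ i) := by
        rw [← hminus2, e2, hplus1]
        funext i
        simp
      calc ∑ i, (z i)⁻¹ * Complex.normSq (u i - (z i : ℂ) * y₂ i)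
          = ∑ i, (z i)⁻¹ * Complex.normSq (μ * (v i + (z i : ℂ) * y₁ i)) :=
            Finset.sum_congr rfl fun i _ => by rw [congrFun h i]
        _ = Complex.normSq μ * N := by
            simp only [Complex.normSq_mul, hN, Finset.mul_sum]
            exact Finset.sum_congr rfl fun i _ => by ring
    have E : Complex.normSq μ * N = N - 4 * (star v ⬝ᵥ y₁).re - 4 * (star u ⬝ᵥ y₂).re := by
      rw [← step2, id₂, step1]
    have hns : Complex.normSq μ < 1 := by nlinarith
    have hnorm : ‖μ‖ < 1 := by
      have hsq : ‖μ‖ ^ 2 = Complex.normSq μ := by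
        rw [Complex.sq_norm]
      nlinarith [norm_nonneg μ]
    rw [← NNReal.coe_lt_coe, coe_nnnorm, NNReal.coe_one]
    exact hnorm
  have hfin := Matrix.finite_spectrum Mc
  calc spectralRadius ℂ Mc
      ≤ ↑(hfin.toFinset.sup fun k => ‖k‖₊) := by
        rw [spectralRadius]
        exact iSup₂_le fun k hk => ENNReal.coe_le_coe.mpr
          (Finset.le_sup (f := fun k => ‖k‖₊) (hfin.mem_toFinset.mpr hk))
    _ < 1 := by
        rw [← ENNReal.coe_one, ENNReal.coe_lt_coe]
        exact (Finset.sup_lt_iff (by norm_num)).mpr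
          fun k hk => key k (hfin.mem_toFinset.mp hk)
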